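/- Let r ≥ 3, and let E and Ẽ be homogeneous r-th order linear ODEs of second Arnold form (coefficients of the zeroth- and first-order terms identically zero, i.e., of the form x^{(r)} + a_{r−1}x^{(r−1)} + ⋯ + a₂x'' = 0) on open intervals I and T(I) respectively. Let T, X₁, X₀ : I → ℝ be smooth with T'(t)X₁(t) ≠ 0 for all t, and suppose the fiber-preserving transformation t̃ = T(t), x̃ = X₁(t)x + X₀(t) maps E to Ẽ and its inverse maps Ẽ to E (for every solution y of Ẽ, the function t ↦ (y(T(t)) − X₀(t))/X₁(t) is a solution of E). Then the functions ψ₁ := 1/X₁ and ψ₂ := T/X₁ are linearly independent solutions of E, and X₀/X₁ is also a solution of E; in particular T = ψ₂/ψ₁. -/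

import Mathlib

open Set

/-- The left-hand side `x^(r)(t) + ∑_{i<r} aᵢ(t) x^(i)(t)` of an `r`-th order linear ODE. -/
noncomputable def odeLHS (r : ℕ) (a : ℕ → ℝ → ℝ) (x : ℝ → ℝ) (t : ℝ) : ℝ :=
  iteratedDeriv r x t + ∑ i ∈ Finset.range r, a i t * iteratedDeriv i x t

/-- `x` is a solution on `I` of the linear ODE `x^(r) + ∑_{i<r} aᵢ x^(i) = b`:
it is smooth on `I` and satisfies the identity on `I`. -/
def IsSolODE (r : ℕ) (a : ℕ → ℝ → ℝ) (b : ℝ → ℝ) (I : Set ℝ) (x : ℝ → ℝ) : Prop :=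
  ContDiffOn ℝ (⊤ : ℕ∞) x I ∧ ∀ t ∈ I, odeLHS r a x t = b t

/-- `I ⊆ ℝ` is a (nonempty) open interval. -/
def IsOpenInterval (I : Set ℝ) : Prop := IsOpen I ∧ I.OrdConnected ∧ I.Nonempty

/-- The fiber-preserving transformation `t̃ = T(t)`, `x̃ = X₁(t)x + X₀(t)` maps the
`r`-th order linear ODE with coefficients `a`, `b` on `I` to the one with coefficients
`a'`, `b'` on `T(I)`: for every solution `x` of the source equation the function
`y(s) = X₁(T⁻¹(s))x(T⁻¹(s)) + X₀(T⁻¹(s))` is a solution of the target equation. -/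
def FPMapsODE (r : ℕ) (I : Set ℝ) (a : ℕ → ℝ → ℝ) (b : ℝ → ℝ)
    (a' : ℕ → ℝ → ℝ) (b' : ℝ → ℝ) (T X₁ X₀ : ℝ → ℝ) : Prop :=
  ∀ x : ℝ → ℝ, IsSolODE r a b I x →
    ∃ y : ℝ → ℝ, IsSolODE r a' b' (T '' I) y ∧ ∀ t ∈ I, y (T t) = X₁ t * x t + X₀ t

/- Auxiliary lemmas -/

lemma iteratedDeriv_zero_fun' (n : ℕ) : iteratedDeriv n (fun _ : ℝ => (0:ℝ)) = fun _ => 0 := by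
  induction n with
  | zero => simp [iteratedDeriv_zero]
  | succ n ih => rw [iteratedDeriv_succ, ih]; simp

lemma iteratedDeriv_const' (n : ℕ) (hn : 1 ≤ n) (c : ℝ) :
    iteratedDeriv n (fun _ : ℝ => c) = fun _ => 0 := by
  obtain ⟨m, rfl⟩ := Nat.exists_eq_add_of_le hn
  rw [add_comm, iteratedDeriv_succ']
  simp only [deriv_const']
  exact iteratedDeriv_zero_fun' m

lemma iteratedDeriv_id' (n : ℕ) (hn : 2 ≤ n) :
    iteratedDeriv n (fun s : ℝ => s) = fun _ => 0 := by
  obtain ⟨m, rfl⟩ := Nat.exists_eq_add_of_le hn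
  rw [add_comm, show m + 2 = (m + 1) + 1 from rfl, iteratedDeriv_succ']
  simp only [deriv_id'']
  exact iteratedDeriv_const' (m + 1) (Nat.le_add_left 1 m) 1

lemma iteratedDerivWithin_of_isOpen' {n : ℕ} {s : Set ℝ} {f : ℝ → ℝ} (hs : IsOpen s)
    {x : ℝ} (hx : x ∈ s) : iteratedDerivWithin n f s x = iteratedDeriv n f x := by
  simp only [iteratedDerivWithin, iteratedDeriv,
    iteratedFDerivWithin_of_isOpen (𝕜 := ℝ) (f := f) n hs hx]

lemma iteratedDeriv_sub_of_contDiffOn {n : ℕ} {s : Set ℝ} {f g : ℝ → ℝ} (hs : IsOpen s)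
    (hf : ContDiffOn ℝ (⊤ : ℕ∞) f s) (hg : ContDiffOn ℝ (⊤ : ℕ∞) g s)
    {x : ℝ} (hx : x ∈ s) :
    iteratedDeriv n (f - g) x = iteratedDeriv n f x - iteratedDeriv n g x := by
  have hu : UniqueDiffOn ℝ s := hs.uniqueDiffOn
  rw [← iteratedDerivWithin_of_isOpen' hs hx, ← iteratedDerivWithin_of_isOpen' hs hx,
    ← iteratedDerivWithin_of_isOpen' hs hx]
  exact iteratedDerivWithin_sub hx hu ((hf.contDiffWithinAt hx).of_le (by exact_mod_cast (le_top : (n : ℕ∞) ≤ ⊤))) ((hg.contDiffWithinAt hx).of_le (by exact_mod_cast (le_top : (n : ℕ∞) ≤ ⊤)))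

lemma isSolODE_sub {r : ℕ} {a : ℕ → ℝ → ℝ} {I : Set ℝ} (hI : IsOpen I) {f g : ℝ → ℝ}
    (hf : IsSolODE r a (fun _ => 0) I f) (hg : IsSolODE r a (fun _ => 0) I g) :
    IsSolODE r a (fun _ => 0) I (f - g) := by
  refine ⟨hf.1.sub hg.1, fun t ht => ?_⟩
  have h1 := hf.2 t ht
  have h2 := hg.2 t ht
  simp only [odeLHS] at h1 h2 ⊢
  have key : ∀ n : ℕ, iteratedDeriv n (f - g) t = iteratedDeriv n f t - iteratedDeriv n g t :=
    fun n => iteratedDeriv_sub_of_contDiffOn hI hf.1 hg.1 ht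
  rw [key]
  have : ∑ i ∈ Finset.range r, a i t * iteratedDeriv i (f - g) t =
      ∑ i ∈ Finset.range r, a i t * iteratedDeriv i f t
      - ∑ i ∈ Finset.range r, a i t * iteratedDeriv i g t := by
    rw [← Finset.sum_sub_distrib]
    exact Finset.sum_congr rfl fun i _ => by rw [key i]; ring
  rw [this]
  linarith

lemma isSolODE_congr {r : ℕ} {a : ℕ → ℝ → ℝ} {I : Set ℝ} {f g : ℝ → ℝ}
    (hfg : ∀ x, f x = g x) (hf : IsSolODE r a (fun _ => 0) I f) :
    IsSolODE r a (fun _ => 0) I g := by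
  have : f = g := funext hfg
  rwa [← this]

/-- if a fiber-preserving transformation `t̃ = T(t)`, `x̃ = X₁(t)x + X₀(t)`
with `T' X₁ ≠ 0` maps a homogeneous `r`-th order (`r ≥ 3`) linear ODE `E` of second
Arnold form (`a₀ ≡ 0`, `a₁ ≡ 0`) to another such equation, with inverse mapping back,
then `ψ₁ = 1/X₁` and `ψ₂ = T/X₁` are linearly independent solutions of `E`, `X₀/X₁` is
also a solution of `E`, and `T = ψ₂/ψ₁`. -/
theorem stmt12 (r : ℕ) (hr : 3 ≤ r) (I : Set ℝ) (hI : IsOpenInterval I)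
    (a a' : ℕ → ℝ → ℝ)
    (T X₁ X₀ : ℝ → ℝ)
    (hT : ContDiffOn ℝ (⊤ : ℕ∞) T I) (hX₁ : ContDiffOn ℝ (⊤ : ℕ∞) X₁ I) (hX₀ : ContDiffOn ℝ (⊤ : ℕ∞) X₀ I)
    (hTX : ∀ t ∈ I, deriv T t * X₁ t ≠ 0)
    (ha : ∀ i, ContDiffOn ℝ (⊤ : ℕ∞) (a i) I) (ha' : ∀ i, ContDiffOn ℝ (⊤ : ℕ∞) (a' i) (T '' I))
    (hA : ∀ t ∈ I, a 0 t = 0 ∧ a 1 t = 0)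
    (hA' : ∀ s ∈ T '' I, a' 0 s = 0 ∧ a' 1 s = 0)
    (hmaps : FPMapsODE r I a (fun _ => 0) a' (fun _ => 0) T X₁ X₀)
    (hinv : ∀ y : ℝ → ℝ, IsSolODE r a' (fun _ => 0) (T '' I) y →
      IsSolODE r a (fun _ => 0) I (fun t => (y (T t) - X₀ t) / X₁ t)) :
    IsSolODE r a (fun _ => 0) I (fun t => 1 / X₁ t) ∧
    IsSolODE r a (fun _ => 0) I (fun t => T t / X₁ t) ∧
    (∀ c₁ c₂ : ℝ, (∀ t ∈ I, c₁ * (1 / X₁ t) + c₂ * (T t / X₁ t) = 0) →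
      c₁ = 0 ∧ c₂ = 0) ∧
    IsSolODE r a (fun _ => 0) I (fun t => X₀ t / X₁ t) ∧
    ∀ t ∈ I, T t = (T t / X₁ t) / (1 / X₁ t) := by
  obtain ⟨hIopen, -, hInonempty⟩ := hI
  have hX₁ne : ∀ t ∈ I, X₁ t ≠ 0 := fun t ht => right_ne_zero_of_mul (hTX t ht)
  -- constant functions and the identity are solutions of E'
  have hsol_const : ∀ c : ℝ, IsSolODE r a' (fun _ => 0) (T '' I) (fun _ => c) := by
    intro c
    refine ⟨contDiffOn_const, fun s hs => ?_⟩
    simp only [odeLHS]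
    rw [iteratedDeriv_const' r (by omega) c]
    rw [Finset.sum_eq_zero]
    · simp
    · intro i hi
      rcases Nat.eq_zero_or_pos i with h0 | h1
      · subst h0
        rw [(hA' s hs).1]; ring
      · rw [iteratedDeriv_const' i h1 c]; ring
  have hsol_id : IsSolODE r a' (fun _ => 0) (T '' I) (fun s => s) := by
    refine ⟨contDiffOn_id, fun s hs => ?_⟩
    simp only [odeLHS]
    rw [iteratedDeriv_id' r (by omega)]
    rw [Finset.sum_eq_zero]
    · simp
    · intro i hi
      match i with
      | 0 => rw [(hA' s hs).1]; ring
      | 1 => rw [(hA' s hs).2]; ring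
      | (n+2) => rw [iteratedDeriv_id' (n+2) (by omega)]; ring
  -- solutions of E obtained from hinv
  have h0 := hinv (fun _ => 0) (hsol_const 0)
  have h1 := hinv (fun _ => 1) (hsol_const 1)
  have hid := hinv (fun s => s) hsol_id
  -- ψ₁ = 1/X₁
  have hψ₁ : IsSolODE r a (fun _ => 0) I (fun t => 1 / X₁ t) := by
    refine isSolODE_congr (f := (fun t => ((1:ℝ) - X₀ t) / X₁ t)
      - (fun t => ((0:ℝ) - X₀ t) / X₁ t)) (fun t => ?_) (isSolODE_sub hIopen h1 h0)
    simp only [Pi.sub_apply, div_sub_div_same]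
    ring_nf
  -- ψ₂ = T/X₁
  have hψ₂ : IsSolODE r a (fun _ => 0) I (fun t => T t / X₁ t) := by
    refine isSolODE_congr (f := (fun t => (T t - X₀ t) / X₁ t)
      - (fun t => ((0:ℝ) - X₀ t) / X₁ t)) (fun t => ?_) (isSolODE_sub hIopen hid h0)
    simp only [Pi.sub_apply, div_sub_div_same]
    ring_nf
  -- X₀/X₁
  have hψ₀ : IsSolODE r a (fun _ => 0) I (fun t => X₀ t / X₁ t) := by
    refine isSolODE_congr (f := (fun t => (1:ℝ) / X₁ t)
      - (fun t => ((1:ℝ) - X₀ t) / X₁ t)) (fun t => ?_) (isSolODE_sub hIopen hψ₁ h1)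
    simp only [Pi.sub_apply, div_sub_div_same]
    ring_nf
  refine ⟨hψ₁, hψ₂, ?_, hψ₀, ?_⟩
  · intro c₁ c₂ hc
    have hc' : ∀ t ∈ I, c₁ + c₂ * T t = 0 := by
      intro t ht
      have := hc t ht
      have hx := hX₁ne t ht
      field_simp at this
      linarith
    by_cases hc₂ : c₂ = 0
    · subst hc₂
      obtain ⟨t, ht⟩ := hInonempty
      refine ⟨by simpa using hc' t ht, rfl⟩
    · exfalso
      obtain ⟨t, ht⟩ := hInonempty
      have hTconst : ∀ s ∈ I, T s = -c₁ / c₂ := by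
        intro s hs
        have := hc' s hs
        field_simp
        linarith
      have hev : T =ᶠ[nhds t] (fun _ => -c₁ / c₂) :=
        Filter.eventuallyEq_of_mem (hIopen.mem_nhds ht) hTconst
      have : deriv T t = 0 := by
        rw [hev.deriv_eq]; simp
      exact hTX t ht (by rw [this]; ring)
  · intro t ht
    have hx := hX₁ne t ht
    field_simp
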